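/- Let W be the bounded Laplace mechanism on [l,u] with scale b, i.e., W with input r has density f_W(r*) = (1/C(r))(1/(2b)) e^{-|r*-r|/b} for r* ∈ [l,u] and 0 otherwise. If b ≥ Δf/(ε - log ΔC), where ΔC = C(l+Δf)/C(l) and ε > log ΔC, then for all inputs r, r' ∈ [l,u] with |r - r'| ≤ Δf and every measurable S ⊆ [l,u], ∫_S f_W^r(x) dx ≤ e^ε ∫_S f_W^{r'}(x) dx (i.e., W satisfies ε-local differential privacy). -/

import Mathlib

set_option maxHeartbeats 1000000

private lemma blp_polyA (x q K : ℝ) (hx : 0 < x) (hx1 : x ≤ 1) (hq : 0 < q) (hq1 : q ≤ 1)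
    (hK : 0 < K) (hKxq : K ≤ x * q) :
    (1 - K) * (2 * (x*q) - (x*q)^2 - K) ≤ (2*q - q^2 - K) * (2*x - x^2 - K) := by
  have h1 : 0 ≤ (1-x)*(1-q)*(2*x*q - K*(x+q+x*q-1)) := by
    apply mul_nonneg (mul_nonneg (by linarith) (by linarith))
    rcases le_or_gt (x+q+x*q-1) 0 with h|h
    · nlinarith [mul_pos hx hq, mul_nonneg hK.le (neg_nonneg.2 h)]
    · nlinarith [mul_le_mul_of_nonneg_right hKxq h.le,
        mul_nonneg (mul_pos hx hq).le
          (show (0:ℝ) ≤ 3 - x - q - x*q by nlinarith [mul_le_mul hx1 hq1 hq.le zero_le_one])]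
  nlinarith [h1]

private lemma blp_polyB (q K Q : ℝ) (hK : 0 < K) (hKQ : K ≤ Q) (hKq : K ≤ q) (hQq : Q ≤ q) :
    Q^2 * (2*q - q^2 - K) ≤ q^2 * (2*Q - Q^2 - K) := by
  nlinarith [mul_nonneg (sub_nonneg.2 hQq)
    (add_nonneg (mul_nonneg (by linarith : (0:ℝ) ≤ Q) (by linarith : (0:ℝ) ≤ q - K))
      (mul_nonneg (by linarith : (0:ℝ) ≤ q) (by linarith : (0:ℝ) ≤ Q - K)))]

private lemma blp_keyC (l u b Δf : ℝ) (hlu : l < u) (hb : 0 < b) (hΔf : 0 < Δf)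
    (hΔfu : Δf ≤ u - l)
    (C : ℝ → ℝ)
    (hC : ∀ r, C r = 1 - (1 / 2) * (Real.exp (-(r - l) / b) + Real.exp (-(u - r) / b)))
    (r r' : ℝ) (hr : l ≤ r) (hrr' : r ≤ r') (hr'u : r' ≤ u) (hd : r' - r ≤ Δf) :
    C l * C r' * Real.exp (-Δf / b) ≤ C (l + Δf) * C r * Real.exp (-(r' - r) / b) := by
  set x := Real.exp (-(r - l) / b) with hxd
  set q := Real.exp (-(r' - r) / b) with hqd
  set K := Real.exp (-(u - l) / b) with hKd
  set Q := Real.exp (-Δf / b) with hQd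
  have hx : 0 < x := Real.exp_pos _
  have hq : 0 < q := Real.exp_pos _
  have hK : 0 < K := Real.exp_pos _
  have hQ : 0 < Q := Real.exp_pos _
  have hx1 : x ≤ 1 := by
    rw [hxd, show (1:ℝ) = Real.exp 0 from Real.exp_zero.symm]
    apply Real.exp_le_exp.2
    rw [neg_div]
    have : (0:ℝ) ≤ (r - l)/b := div_nonneg (by linarith) hb.le
    linarith
  have hq1 : q ≤ 1 := by
    rw [hqd, show (1:ℝ) = Real.exp 0 from Real.exp_zero.symm]
    apply Real.exp_le_exp.2
    rw [neg_div]
    have : (0:ℝ) ≤ (r' - r)/b := div_nonneg (by linarith) hb.le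
    linarith
  have hKxq : K ≤ x * q := by
    rw [hxd, hqd, hKd, ← Real.exp_add]
    apply Real.exp_le_exp.2
    rw [← add_div]
    gcongr
    linarith
  have hKQ : K ≤ Q := by
    rw [hKd, hQd]
    apply Real.exp_le_exp.2
    gcongr
  have hQq : Q ≤ q := by
    rw [hQd, hqd]
    apply Real.exp_le_exp.2
    gcongr
  have Eb : Real.exp (-(u - r) / b) = Real.exp (-(u - l) / b) / Real.exp (-(r - l) / b) := by
    rw [← Real.exp_sub]; congr 1; ring
  have Ec : Real.exp (-(u - r') / b)
      = Real.exp (-(u - l) / b) / (Real.exp (-(r - l) / b) * Real.exp (-(r' - r) / b)) := by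
    rw [← Real.exp_add, ← Real.exp_sub]; congr 1; ring
  have Ea : Real.exp (-(r' - l) / b) = Real.exp (-(r - l) / b) * Real.exp (-(r' - r) / b) := by
    rw [← Real.exp_add]; congr 1; ring
  have Ed : Real.exp (-(u - (l + Δf)) / b) = Real.exp (-(u - l) / b) / Real.exp (-Δf / b) := by
    rw [← Real.exp_sub]; congr 1; ring
  have El : Real.exp (-(l - l) / b) = 1 := by
    rw [show -(l-l)/b = (0:ℝ) by ring, Real.exp_zero]
  have Ee : Real.exp (-(l + Δf - l) / b) = Real.exp (-Δf / b) := by congr 1; ring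
  have hCl : C l = (1 - K)/2 := by rw [hC, El, hKd]; ring
  have hCr : C r = (2*x - x^2 - K)/(2*x) := by
    rw [hC, Eb, hxd, hKd]; field_simp; ring
  have hCr' : C r' = (2*(x*q) - (x*q)^2 - K)/(2*(x*q)) := by
    rw [hC, Ea, Ec, hxd, hqd, hKd]; field_simp; ring
  have hClΔ : C (l + Δf) = (2*Q - Q^2 - K)/(2*Q) := by
    rw [hC, Ee, Ed, hQd, hKd]; field_simp; ring
  have hD : (0:ℝ) ≤ 2*x - x^2 - K := by
    nlinarith [mul_nonneg hx.le (sub_nonneg.2 hx1), mul_le_of_le_one_right hx.le hq1]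
  have hA := blp_polyA x q K hx hx1 hq hq1 hK hKxq
  have hB := blp_polyB q K Q hK hKQ (le_trans hKQ hQq) hQq
  have hchain : Q^2*((1-K)*(2*(x*q)-(x*q)^2-K)) ≤ q^2*((2*Q-Q^2-K)*(2*x-x^2-K)) := by
    nlinarith [mul_le_mul_of_nonneg_left hA (sq_nonneg Q), mul_le_mul_of_nonneg_right hB hD]
  have final : ((1-K)/2) * ((2*(x*q) - (x*q)^2 - K)/(2*(x*q))) * Q
      ≤ ((2*Q-Q^2-K)/(2*Q)) * ((2*x-x^2-K)/(2*x)) * q := by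
    rw [show ((1-K)/2) * ((2*(x*q) - (x*q)^2 - K)/(2*(x*q))) * Q
          = ((1-K) * (2*(x*q) - (x*q)^2 - K) * Q)/(4*(x*q)) from by ring,
        show ((2*Q-Q^2-K)/(2*Q)) * ((2*x-x^2-K)/(2*x)) * q
          = ((2*Q-Q^2-K) * (2*x-x^2-K) * q)/(4*(Q*x)) from by ring,
        div_le_div_iff₀ (by positivity) (by positivity)]
    nlinarith [mul_le_mul_of_nonneg_left hchain (show (0:ℝ) ≤ 4*x by positivity)]
  calc C l * C r' * Q
      = ((1-K)/2) * ((2*(x*q) - (x*q)^2 - K)/(2*(x*q))) * Q := by rw [hCl, hCr']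
    _ ≤ ((2*Q-Q^2-K)/(2*Q)) * ((2*x-x^2-K)/(2*x)) * q := final
    _ = C (l + Δf) * C r * q := by rw [hClΔ, hCr]

theorem blp_ldp (l u b Δf ε : ℝ) (hlu : l < u) (hb : 0 < b)
    (hΔf : 0 < Δf) (hΔfu : Δf ≤ u - l) (hε : 0 < ε)
    (C : ℝ → ℝ)
    (hC : ∀ r, C r = 1 - (1 / 2) * (Real.exp (-(r - l) / b) + Real.exp (-(u - r) / b)))
    (f : ℝ → ℝ → ℝ)
    (hf : ∀ r x, f r x = (1 / (2 * b * C r)) * Real.exp (-|x - r| / b))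
    (hεC : Real.log (C (l + Δf) / C l) < ε)
    (hbige : b ≥ Δf / (ε - Real.log (C (l + Δf) / C l))) :
    ∀ r ∈ Set.Icc l u, ∀ r' ∈ Set.Icc l u, |r - r'| ≤ Δf →
      ∀ S : Set ℝ, MeasurableSet S → S ⊆ Set.Icc l u →
        ∫ x in S, f r x ≤ Real.exp ε * ∫ x in S, f r' x := by
  set L := Real.log (C (l + Δf) / C l) with hLdef
  intro r hr r' hr' hdist S hS hSsub
  -- positivity of C on [l,u]
  have hCpos : ∀ s, l ≤ s → s ≤ u → 0 < C s := by
    intro s hs1 hs2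
    rw [hC]
    have h1 : Real.exp (-(s - l) / b) ≤ 1 := by
      rw [show (1:ℝ) = Real.exp 0 from Real.exp_zero.symm]
      apply Real.exp_le_exp.2
      rw [neg_div]
      have : (0:ℝ) ≤ (s - l)/b := div_nonneg (by linarith) hb.le
      linarith
    have h2 : Real.exp (-(u - s) / b) ≤ 1 := by
      rw [show (1:ℝ) = Real.exp 0 from Real.exp_zero.symm]
      apply Real.exp_le_exp.2
      rw [neg_div]
      have : (0:ℝ) ≤ (u - s)/b := div_nonneg (by linarith) hb.le
      linarith
    rcases eq_or_lt_of_le hs2 with heq|hlt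
    · have h3 : Real.exp (-(s - l) / b) < 1 := by
        rw [show (1:ℝ) = Real.exp 0 from Real.exp_zero.symm]
        apply Real.exp_lt_exp.2
        rw [neg_div]
        have : (0:ℝ) < (s - l)/b := div_pos (by rw [heq]; linarith) hb
        linarith
      linarith
    · have h3 : Real.exp (-(u - s) / b) < 1 := by
        rw [show (1:ℝ) = Real.exp 0 from Real.exp_zero.symm]
        apply Real.exp_lt_exp.2
        rw [neg_div]
        have : (0:ℝ) < (u - s)/b := div_pos (by linarith) hb
        linarith
      linarith
  have hClpos : 0 < C l := hCpos l le_rfl hlu.le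
  have hCΔpos : 0 < C (l + Δf) := hCpos (l + Δf) (by linarith) (by linarith)
  have hCrpos : 0 < C r := hCpos r hr.1 hr.2
  have hCr'pos : 0 < C r' := hCpos r' hr'.1 hr'.2
  -- symmetry of C
  have Csym : ∀ s, C (l + u - s) = C s := by
    intro s
    rw [hC, hC, show -(l + u - s - l)/b = -(u - s)/b from by ring,
        show -(u - (l + u - s))/b = -(s - l)/b from by ring]
    ring
  -- key inequality with |r - r'|
  have keyineq : C l * C r' * Real.exp (-Δf / b)
      ≤ C (l + Δf) * C r * Real.exp (-(|r - r'|) / b) := by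
    rcases le_total r r' with h|h
    · have habs : |r - r'| = r' - r := by
        rw [abs_sub_comm]; exact abs_of_nonneg (by linarith)
      rw [habs] at hdist ⊢
      exact blp_keyC l u b Δf hlu hb hΔf hΔfu C hC r r' hr.1 h hr'.2 hdist
    · have habs : |r - r'| = r - r' := abs_of_nonneg (by linarith)
      rw [habs] at hdist ⊢
      have hk := blp_keyC l u b Δf hlu hb hΔf hΔfu C hC (l + u - r) (l + u - r')
        (by linarith [hr.2]) (by linarith) (by linarith [hr'.1]) (by linarith)
      rw [Csym, Csym, show l + u - r' - (l + u - r) = r - r' from by ring] at hk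
      exact hk
  -- log facts
  have hεL : (0:ℝ) < ε - L := by linarith
  have hΔfb : Δf / b ≤ ε - L := by
    have h1 : Δf ≤ b * (ε - L) := (div_le_iff₀ hεL).1 hbige
    rw [div_le_iff₀ hb]
    linarith
  have hLexp : Real.exp L = C (l + Δf) / C l :=
    Real.exp_log (div_pos hCΔpos hClpos)
  have hLmul : C (l + Δf) = Real.exp L * C l := by
    rw [hLexp]; field_simp
  -- master pointwise constant inequality
  have h5 : C r' * Real.exp (-Δf / b)
      ≤ Real.exp L * (C r * Real.exp (-(|r - r'|) / b)) := by
    rw [hLmul] at keyineq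
    nlinarith [keyineq, hClpos]
  have hmaster : C r' * Real.exp (|r - r'| / b) ≤ Real.exp ε * C r := by
    have e1 : Real.exp (-Δf / b) * Real.exp (Δf / b) = 1 := by
      rw [← Real.exp_add]; rw [show -Δf/b + Δf/b = (0:ℝ) from by ring, Real.exp_zero]
    have e2 : Real.exp (-(|r - r'|) / b) * Real.exp (|r - r'| / b) = 1 := by
      rw [← Real.exp_add]
      rw [show -(|r - r'|)/b + |r - r'|/b = (0:ℝ) from by ring, Real.exp_zero]
    have h7 : Real.exp L * Real.exp (Δf / b) ≤ Real.exp ε := by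
      rw [← Real.exp_add]; exact Real.exp_le_exp.2 (by linarith)
    have h8 := mul_le_mul_of_nonneg_right h5
      (le_of_lt (mul_pos (Real.exp_pos (Δf / b)) (Real.exp_pos (|r - r'| / b))))
    have lhs_eq : C r' * Real.exp (-Δf / b) * (Real.exp (Δf / b) * Real.exp (|r - r'| / b))
        = C r' * Real.exp (|r - r'| / b) := by
      linear_combination (C r' * Real.exp (|r - r'| / b)) * e1
    have rhs_eq : Real.exp L * (C r * Real.exp (-(|r - r'|) / b))
          * (Real.exp (Δf / b) * Real.exp (|r - r'| / b))
        = (Real.exp L * Real.exp (Δf / b)) * C r := by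
      linear_combination (Real.exp L * Real.exp (Δf / b) * C r) * e2
    rw [lhs_eq, rhs_eq] at h8
    exact le_trans h8 (mul_le_mul_of_nonneg_right h7 hCrpos.le)
  -- pointwise bound
  have hpt : ∀ x ∈ S, f r x ≤ Real.exp ε * f r' x := by
    intro x hx
    rw [hf, hf]
    have h9 : Real.exp (-|x - r| / b)
        ≤ Real.exp (|r - r'| / b) * Real.exp (-|x - r'| / b) := by
      rw [← Real.exp_add]
      apply Real.exp_le_exp.2
      rw [← add_div]
      gcongr
      linarith [abs_sub_le x r r']
    have hm : C r' * Real.exp (-|x - r| / b)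
        ≤ (Real.exp ε * C r) * Real.exp (-|x - r'| / b) := by
      calc C r' * Real.exp (-|x - r| / b)
          ≤ C r' * (Real.exp (|r - r'| / b) * Real.exp (-|x - r'| / b)) :=
            mul_le_mul_of_nonneg_left h9 hCr'pos.le
        _ = (C r' * Real.exp (|r - r'| / b)) * Real.exp (-|x - r'| / b) := by ring
        _ ≤ (Real.exp ε * C r) * Real.exp (-|x - r'| / b) :=
            mul_le_mul_of_nonneg_right hmaster (Real.exp_pos _).le
    rw [show 1 / (2 * b * C r) * Real.exp (-|x - r| / b)
          = Real.exp (-|x - r| / b) / (2 * b * C r) from by ring,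
        show Real.exp ε * (1 / (2 * b * C r') * Real.exp (-|x - r'| / b))
          = (Real.exp ε * Real.exp (-|x - r'| / b)) / (2 * b * C r') from by ring,
        div_le_div_iff₀ (by nlinarith) (by nlinarith)]
    nlinarith [mul_le_mul_of_nonneg_left hm (show (0:ℝ) ≤ 2*b by linarith)]
  -- integrability
  have hint : ∀ s : ℝ, MeasureTheory.IntegrableOn (f s) S MeasureTheory.volume := by
    intro s
    have hfe : f s = fun x => (1 / (2 * b * C s)) * Real.exp (-|x - s| / b) :=
      funext (hf s)
    rw [hfe]
    apply MeasureTheory.IntegrableOn.mono_set _ hSsub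
    apply Continuous.integrableOn_Icc
    exact continuous_const.mul
      ((((continuous_id.sub continuous_const).abs.neg).div_const b).rexp)
  calc ∫ x in S, f r x
      ≤ ∫ x in S, Real.exp ε * f r' x :=
        MeasureTheory.setIntegral_mono_on (hint r) ((hint r').const_mul _) hS hpt
    _ = Real.exp ε * ∫ x in S, f r' x := by
        rw [MeasureTheory.integral_const_mul]
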